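/- arXiv:1404.1331 — 3 statements merged into one kernel-verified Lean document; each statement's English description precedes it below -/
import Mathlib

section
/- For every integer m, (1/(2π))∫₀^{2π} ln(4 sin²(t/2)) e^{imt} dt equals 0 if m = 0 and equals −1/|m| otherwise. -/
open MeasureTheory Real Complex Filter Topology

/-- Fourier coefficient of a 2π-periodic function on [0, 2π]. -/
noncomputable def fCoeff (φ : ℝ → ℂ) (m : ℤ) : ℂ :=
  (1 / (2 * Real.pi) : ℂ) *
    ∫ t in (0:ℝ)..(2 * Real.pi), φ t * Complex.exp (-(Complex.I) * m * t)

lemma intExp (k : ℤ) : (∫ t in (0:ℝ)..(2*π), Complex.exp (Complex.I * k * t))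
    = if k = 0 then (2*π : ℂ) else 0 := by
  rcases eq_or_ne k 0 with hk | hk
  · simp [hk, Complex.ofReal_mul, mul_comm]
  · rw [if_neg hk]
    have hc : (Complex.I * k) ≠ 0 := by
      simp [Complex.I_ne_zero, Complex.ext_iff, hk]
    have := integral_exp_mul_complex (a := 0) (b := 2*π) hc
    simp only [mul_assoc] at this ⊢
    rw [this]
    have h1 : Complex.exp (Complex.I * ((k:ℂ) * (2*π:ℝ))) = 1 := by
      rw [show Complex.I * ((k:ℂ) * (2*π:ℝ)) = (k:ℂ) * (2*π*Complex.I) by push_cast; ring]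
      exact Complex.exp_int_mul_two_pi_mul_I k
    rw [show ((2*π:ℝ):ℂ) = 2*(π:ℂ) by push_cast; ring] at h1
    simp [h1]

lemma cos_ofReal_eq (y : ℝ) : (Real.cos y : ℂ)
    = (Complex.exp (Complex.I * y) + Complex.exp (-(Complex.I * y)))/2 := by
  rw [Complex.ofReal_cos]
  have h1 := Complex.cos_add_sin_I (x := (y:ℂ))
  have h2 := Complex.cos_sub_sin_I (x := (y:ℂ))
  rw [show -(Complex.I * (y:ℂ)) = -(y:ℂ) * Complex.I by ring, show Complex.I * (y:ℂ) = (y:ℂ) * Complex.I by ring]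
  linear_combination (h1 + h2)/2

lemma intCos (n : ℕ) (hn : 1 ≤ n) (m : ℤ) :
    (∫ t in (0:ℝ)..(2*π), (Real.cos (n*t) : ℂ) * Complex.exp (Complex.I * m * t))
    = if (n:ℤ) = |m| then (π:ℂ) else 0 := by
  have key : ∀ t : ℝ, (Real.cos (n*t) : ℂ) * Complex.exp (Complex.I * m * t)
      = (Complex.exp (Complex.I * ((m + n : ℤ):ℂ) * t) + Complex.exp (Complex.I * ((m - n : ℤ):ℂ) * t))/2 := by
    intro t
    have e1 : Complex.I * (((n:ℝ)*t : ℝ):ℂ) + Complex.I * m * t = Complex.I * ((m + n : ℤ):ℂ) * t := by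
      push_cast; ring
    have e2 : -(Complex.I * (((n:ℝ)*t : ℝ):ℂ)) + Complex.I * m * t = Complex.I * ((m - n : ℤ):ℂ) * t := by
      push_cast; ring
    rw [cos_ofReal_eq, div_mul_eq_mul_div, add_mul, ← Complex.exp_add, ← Complex.exp_add, e1, e2]
  simp only [key]
  rw [intervalIntegral.integral_div]
  rw [intervalIntegral.integral_add (by apply Continuous.intervalIntegrable; fun_prop)
    (by apply Continuous.intervalIntegrable; fun_prop)]
  rw [intExp, intExp]
  rcases eq_or_ne (n:ℤ) |m| with h | h
  · rw [if_pos h]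
    have hn0 : (n:ℤ) ≠ 0 := by exact_mod_cast Nat.one_le_iff_ne_zero.mp hn
    have hm0 : m ≠ 0 := by rintro rfl; simp at h; omega
    rcases abs_cases m with ⟨he, _⟩ | ⟨he, _⟩
    · rw [if_neg (by omega), if_pos (by omega)]
      push_cast; ring
    · rw [if_pos (by omega), if_neg (by omega)]
      push_cast; ring
  · rw [if_neg h, if_neg (by rcases abs_cases m with ⟨he,_⟩|⟨he,_⟩ <;> omega),
      if_neg (by rcases abs_cases m with ⟨he,_⟩|⟨he,_⟩ <;> omega)]
    norm_num

lemma logSeries {r : ℝ} (h0 : 0 ≤ r) (h1 : r < 1) (t : ℝ) :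
    HasSum (fun n : ℕ => (-2) * r^n * Real.cos (n*t) / n)
      (Real.log (1 - 2*r*Real.cos t + r^2)) := by
  set z : ℂ := (r:ℂ) * Complex.exp (Complex.I * t) with hz
  have hnorm : ‖z‖ < 1 := by
    have : ‖z‖ = r := by
      rw [hz, norm_mul, Complex.norm_exp]
      simp [Complex.norm_real, _root_.abs_of_nonneg h0]
    rw [this]; exact h1
  have H := Complex.hasSum_taylorSeries_neg_log hnorm
  have Hre := H.mapL Complex.reCLM
  have hterm : ∀ n : ℕ, Complex.reCLM (z^n/n) = r^n * Real.cos (n*t) / n := by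
    intro n
    have : z^n = ((r^n : ℝ):ℂ) * Complex.exp ((n*t : ℝ) * Complex.I) := by
      rw [hz, mul_pow, ← Complex.exp_nat_mul]
      push_cast
      ring_nf
    simp only [Complex.reCLM_apply, this]
    rcases Nat.eq_zero_or_pos n with rfl | hn
    · simp
    rw [show ((r^n:ℝ):ℂ) * Complex.exp ((n*t:ℝ) * Complex.I) / n
        = ((r^n / n : ℝ):ℂ) * Complex.exp ((n*t:ℝ) * Complex.I) by push_cast; ring]
    rw [Complex.re_ofReal_mul, Complex.exp_ofReal_mul_I_re]
    ring
  have habs : Complex.reCLM (-Complex.log (1 - z)) = -Real.log ‖1-z‖ := by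
    simp [Complex.log_re]
  rw [funext hterm, habs] at Hre
  have Hfin := Hre.mul_left (-2)
  have hmod : 1 - 2*r*Real.cos t + r^2 = ‖1-z‖ ^ 2 := by
    rw [Complex.sq_norm, Complex.normSq_apply, hz]
    have h1 : (1 - (r:ℂ) * Complex.exp (Complex.I * t)).re = 1 - r * Real.cos t := by
      simp [Complex.exp_re, Complex.exp_im, Complex.sub_re, Complex.mul_re]
    have h2 : (1 - (r:ℂ) * Complex.exp (Complex.I * t)).im = -(r * Real.sin t) := by
      simp [Complex.exp_re, Complex.exp_im, Complex.sub_im, Complex.mul_im]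
    rw [h1, h2]
    nlinarith [Real.sin_sq_add_cos_sq t]
  rw [hmod, Real.log_pow]
  have e1 : (fun n : ℕ => (-2) * r^n * Real.cos (n*t) / n)
      = fun i : ℕ => -2 * (r ^ i * Real.cos (↑i * t) / ↑i) := by funext n; ring
  have e2 : ((2:ℕ):ℝ) * Real.log ‖1-z‖ = -2 * -Real.log ‖1 - z‖ := by push_cast; ring
  rw [e1, e2]; exact Hfin

lemma intR {r : ℝ} (h0 : 0 ≤ r) (h1 : r < 1) (m : ℤ) :
    (∫ t in Set.Ioo (0:ℝ) (2*π),
      ((Real.log (1 - 2*r*Real.cos t + r^2) : ℝ):ℂ) * Complex.exp (Complex.I * m * t))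
    = -2*(π:ℂ)*((r:ℂ)^m.natAbs)/(m.natAbs : ℂ) := by
  have hπ : (0:ℝ) ≤ 2*π := by positivity
  set μ := volume.restrict (Set.Ioo (0:ℝ) (2*π)) with hμ
  set F : ℕ → ℝ → ℂ := fun n t =>
    (((-2)*r^n*Real.cos (n*t)/n : ℝ) : ℂ) * Complex.exp (Complex.I * m * t) with hF
  have hcont : ∀ n, Continuous (F n) := by intro n; fun_prop
  have hF_int : ∀ n, Integrable (F n) μ := fun n =>
    ((hcont n).integrableOn_Icc).mono_set Set.Ioo_subset_Icc_self
  have hbd : ∀ n t, ‖F n t‖ ≤ 2 * r^n := by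
    intro n t
    rcases Nat.eq_zero_or_pos n with rfl | hn
    · simp [hF]
    · rw [hF]
      simp only [norm_mul, Complex.norm_real]
      rw [show Complex.I * m * t = ((m*t : ℝ):ℂ) * Complex.I by push_cast; ring,
        Complex.norm_exp_ofReal_mul_I, mul_one]
      rw [Real.norm_eq_abs, abs_div, abs_mul, abs_mul]
      have hrn : |r^n| = r^n := _root_.abs_of_nonneg (by positivity)
      have h2 : |(-2 : ℝ)| = 2 := by norm_num
      rw [hrn, h2, _root_.abs_of_nonneg (by positivity : (0:ℝ) ≤ (n:ℝ))]
      have hcos := abs_cos_le_one ((n:ℝ)*t)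
      have hn1 : (1:ℝ) ≤ n := by exact_mod_cast hn
      calc 2 * r^n * |Real.cos (n*t)| / n ≤ 2 * r^n * 1 / 1 := by
            apply div_le_div₀ (by positivity) (by nlinarith [pow_nonneg h0 n]) one_pos hn1
        _ = 2 * r^n := by ring
  have hF_sum : Summable fun n => ∫ t, ‖F n t‖ ∂μ := by
    apply Summable.of_nonneg_of_le
      (fun n => integral_nonneg (fun t => norm_nonneg _))
      (fun n => ?_) (((summable_geometric_of_lt_one h0 h1).mul_left (2*(2*π))))
    calc ∫ t, ‖F n t‖ ∂μ ≤ ∫ _t, 2*r^n ∂μ := by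
          apply integral_mono_of_nonneg (ae_of_all _ (fun t => norm_nonneg _))
            (integrable_const _) (ae_of_all _ (hbd n))
      _ = (μ Set.univ).toReal * (2*r^n) := by rw [integral_const]; simp [smul_eq_mul, Measure.real]
      _ ≤ 2*(2*π) * r^n := by
          rw [hμ]
          simp [Measure.restrict_apply, Real.volume_Ioo]
          rw [ENNReal.toReal_ofReal Real.pi_pos.le]
          nlinarith [pow_nonneg h0 n]
  have KEY := MeasureTheory.hasSum_integral_of_summable_integral_norm hF_int hF_sum
  have hpt : ∀ t : ℝ, ∑' n, F n t
      = ((Real.log (1 - 2*r*Real.cos t + r^2) : ℝ):ℂ) * Complex.exp (Complex.I * m * t) := by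
    intro t
    have := ((logSeries h0 h1 t).mapL Complex.ofRealCLM).mul_right
      (Complex.exp (Complex.I * m * t))
    exact this.tsum_eq
  have hval : ∀ n, (∫ t, F n t ∂μ)
      = if n = m.natAbs then -2*(π:ℂ)*((r:ℂ)^m.natAbs)/(m.natAbs : ℂ) else 0 := by
    intro n
    rcases Nat.eq_zero_or_pos n with rfl | hn
    · have : F 0 = fun _ => 0 := by funext t; simp [hF]
      rw [this]
      simp only [integral_zero]
      rcases eq_or_ne (0:ℕ) m.natAbs with h | h
      · rw [if_pos h, ← h]; simp
      · rw [if_neg h]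
    · have heq : (∫ t, F n t ∂μ)
          = (((-2)*r^n/n : ℝ) : ℂ) * ∫ t in (0:ℝ)..(2*π), (Real.cos (n*t) : ℂ) * Complex.exp (Complex.I * m * t) := by
        rw [hμ, ← MeasureTheory.integral_Ioc_eq_integral_Ioo,
          ← intervalIntegral.integral_of_le hπ, ← intervalIntegral.integral_const_mul]
        apply intervalIntegral.integral_congr
        intro t _
        rw [hF]
        push_cast
        ring
      rw [heq, intCos n hn m]
      simp only [Int.abs_eq_natAbs]
      rcases eq_or_ne n m.natAbs with h | h
      · rw [if_pos (by exact_mod_cast h), if_pos h]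
        subst h
        have hn0 : ((m.natAbs:ℕ):ℂ) ≠ 0 := by
          exact_mod_cast Nat.pos_iff_ne_zero.mp hn
        push_cast
        ring
      · rw [if_neg (fun hc => h (by exact_mod_cast hc)), if_neg h, mul_zero]
  simp_rw [hpt] at KEY
  rw [funext hval] at KEY
  exact KEY.unique (hasSum_ite_eq m.natAbs _)

lemma sinHalfLower {t : ℝ} (ht : t ∈ Set.Ioo (0:ℝ) (2*π)) :
    t*(2*π - t) / (2*π^2) ≤ Real.sin (t/2) := by
  obtain ⟨ht0, ht2⟩ := ht
  have hπ := Real.pi_pos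
  have hu0 : 0 < t/2 := by linarith
  have huπ : t/2 < π := by linarith
  rcases le_or_gt (t/2) (π/2) with h | h
  · have h1 := Real.mul_le_sin hu0.le h
    have e1 : 2/π*(t/2) = t/π := by field_simp
    rw [e1] at h1
    refine le_trans ?_ h1
    rw [div_le_div_iff₀ (by positivity) (by positivity)]
    nlinarith [mul_nonneg (mul_nonneg ht0.le ht0.le) hπ.le]
  · have h1 : Real.sin (t/2) = Real.sin (π - t/2) := (Real.sin_pi_sub (t/2)).symm
    have h2 := Real.mul_le_sin (x := π - t/2) (by linarith) (by linarith)
    have e1 : 2/π*(π - t/2) = (2*π - t)/π := by field_simp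
    rw [e1] at h2
    rw [h1]
    refine le_trans ?_ h2
    rw [div_le_div_iff₀ (by positivity) (by positivity)]
    nlinarith [mul_nonneg hπ.le (sq_nonneg (2*π - t))]

lemma oneSubCosLower {t : ℝ} (ht : t ∈ Set.Ioo (0:ℝ) (2*π)) :
    t^2*(2*π - t)^2 / (2*π^4) ≤ 1 - Real.cos t ∧ 0 < 1 - Real.cos t := by
  obtain ⟨ht0, ht2⟩ := ht
  have hπ := Real.pi_pos
  have hdouble : 1 - Real.cos t = 2 * Real.sin (t/2)^2 := by
    have h := Real.cos_two_mul' (t/2)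
    have h2 : 2*(t/2) = t := by ring
    rw [h2] at h
    have h3 := Real.sin_sq_add_cos_sq (t/2)
    linarith
  have hs := sinHalfLower ⟨ht0, ht2⟩
  have hspos : 0 < Real.sin (t/2) :=
    Real.sin_pos_of_pos_of_lt_pi (by linarith) (by linarith)
  constructor
  · rw [hdouble]
    have hA : 0 ≤ t*(2*π - t)/(2*π^2) :=
      div_nonneg (mul_nonneg ht0.le (by linarith)) (by positivity)
    have hsq := pow_le_pow_left₀ hA hs 2
    have he : t^2*(2*π - t)^2 / (2*π^4) = 2*(t*(2*π - t)/(2*π^2))^2 := by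
      field_simp
    nlinarith
  · rw [hdouble]; positivity

noncomputable def B (t : ℝ) : ℝ :=
  Real.log 4 + (Real.log (2*π^4) - 2*Real.log t - 2*Real.log (2*π - t))

lemma logBound {r t : ℝ} (hr : 1/2 ≤ r) (hr1 : r ≤ 1) (ht : t ∈ Set.Ioo (0:ℝ) (2*π)) :
    |Real.log (1 - 2*r*Real.cos t + r^2)| ≤ B t := by
  obtain ⟨ht0, ht2⟩ := ht
  have hπ := Real.pi_pos
  have hc1 := Real.cos_le_one t
  have hc2 := Real.neg_one_le_cos t
  obtain ⟨hlow, hpos⟩ := oneSubCosLower ⟨ht0, ht2⟩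
  set x := 1 - 2*r*Real.cos t + r^2 with hx
  have hxlow : 1 - Real.cos t ≤ x := by nlinarith [sq_nonneg (r-1)]
  have hxhi : x ≤ 4 := by nlinarith
  have hxpos : 0 < x := lt_of_lt_of_le hpos hxlow
  have h2πt : 0 < 2*π - t := by linarith
  -- D := log(2π⁴) − 2 log t − 2 log(2π−t)
  have hquot : Real.log (t^2*(2*π - t)^2 / (2*π^4))
      = 2*Real.log t + 2*Real.log (2*π - t) - Real.log (2*π^4) := by
    rw [Real.log_div (by positivity) (by positivity), Real.log_mul (by positivity) (by positivity),
      Real.log_pow, Real.log_pow]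
    push_cast
    ring
  have hD1 : Real.log (t^2*(2*π - t)^2 / (2*π^4)) ≤ Real.log (1 - Real.cos t) :=
    Real.log_le_log (by positivity) hlow
  have hD2 : Real.log (1 - Real.cos t) ≤ Real.log x := Real.log_le_log hpos hxlow
  have hD0 : 2*Real.log t + 2*Real.log (2*π - t) ≤ Real.log (2*π^4) := by
    have hmul : t * (2*π - t) ≤ π^2 := by nlinarith [sq_nonneg (t - π)]
    have h1 : Real.log t + Real.log (2*π - t) = Real.log (t*(2*π - t)) :=
      (Real.log_mul (by positivity) (by positivity)).symm
    have h2 : Real.log (t*(2*π - t)) ≤ Real.log (π^2) := Real.log_le_log (by positivity) hmul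
    have h3 : Real.log (π^4) ≤ Real.log (2*π^4) := Real.log_le_log (by positivity) (by nlinarith)
    have h4 : Real.log (π^4) = 2 * Real.log (π^2) := by
      rw [Real.log_pow, Real.log_pow]; push_cast; ring
    linarith
  have hlog4 : (0:ℝ) ≤ Real.log 4 := Real.log_nonneg (by norm_num)
  rw [abs_le]
  constructor
  · have : Real.log (t^2*(2*π - t)^2 / (2*π^4)) ≤ Real.log x := le_trans hD1 hD2
    rw [hquot] at this
    simp only [B]
    linarith
  · have : Real.log x ≤ Real.log 4 := Real.log_le_log hxpos hxhi
    simp only [B]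
    linarith

lemma intLogIoo {c : ℝ} (hc : 0 < c) : IntegrableOn Real.log (Set.Ioo 0 c) volume := by
  have hg : IntegrableOn (fun t : ℝ => 2 * t^(-(1:ℝ)/2) + c) (Set.Ioo 0 c) volume := by
    have h1 : IntervalIntegrable (fun t : ℝ => t^(-(1:ℝ)/2)) volume 0 c :=
      intervalIntegral.intervalIntegrable_rpow' (by norm_num)
    have h2 := (h1.const_mul 2).add (intervalIntegrable_const (c := c))
    rwa [intervalIntegrable_iff_integrableOn_Ioo_of_le hc.le] at h2
  apply Integrable.mono' hg Real.measurable_log.aestronglyMeasurable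
  rw [ae_restrict_iff' measurableSet_Ioo]
  apply ae_of_all
  rintro t ⟨ht0, htc⟩
  rw [Real.norm_eq_abs]
  have hrp : (0:ℝ) ≤ t^(-(1:ℝ)/2) := Real.rpow_nonneg ht0.le _
  rcases le_or_gt t 1 with h | h
  · have hneg : Real.log t ≤ 0 := Real.log_nonpos ht0.le h
    rw [abs_of_nonpos hneg]
    have hlr : Real.log (t^(-(1:ℝ)/2)) = (-(1:ℝ)/2) * Real.log t := Real.log_rpow ht0 _
    have hle : Real.log (t^(-(1:ℝ)/2)) ≤ t^(-(1:ℝ)/2) :=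
      le_trans (Real.log_le_sub_one_of_pos (by positivity)) (by linarith)
    nlinarith
  · have hpos' : 0 ≤ Real.log t := Real.log_nonneg h.le
    rw [_root_.abs_of_nonneg hpos']
    have := Real.log_le_sub_one_of_pos ht0
    nlinarith

lemma intB : IntegrableOn B (Set.Ioo (0:ℝ) (2*π)) volume := by
  have hπ : (0:ℝ) < 2*π := by positivity
  have h1 : IntegrableOn Real.log (Set.Ioo (0:ℝ) (2*π)) volume := intLogIoo hπ
  have h1' : IntervalIntegrable Real.log volume 0 (2*π) := by
    rwa [intervalIntegrable_iff_integrableOn_Ioo_of_le hπ.le]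
  have h2' : IntervalIntegrable (fun t => Real.log (2*π - t)) volume 0 (2*π) := by
    have := (h1'.comp_sub_left (2*π)).symm
    simpa using this
  have h2 : IntegrableOn (fun t => Real.log (2*π - t)) (Set.Ioo (0:ℝ) (2*π)) volume := by
    rwa [intervalIntegrable_iff_integrableOn_Ioo_of_le hπ.le] at h2'
  have hconst : IntegrableOn (fun _ : ℝ => Real.log 4 + Real.log (2*π^4))
      (Set.Ioo (0:ℝ) (2*π)) volume := (integrableOn_const_iff (C := Real.log 4 + Real.log (2*π^4))).mpr (Or.inr (by
        rw [Real.volume_Ioo]; exact ENNReal.ofReal_lt_top))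
  have := (hconst.sub (h1.const_mul 2)).sub (h2.const_mul 2)
  exact MeasureTheory.IntegrableOn.congr_fun this
    (fun t _ => by simp only [B, Pi.sub_apply]; ring) measurableSet_Ioo

lemma keyLimit (m : ℤ) :
    (∫ t in Set.Ioo (0:ℝ) (2*π),
      ((Real.log (2 - 2*Real.cos t) : ℝ):ℂ) * Complex.exp (Complex.I * m * t))
    = -2*(π:ℂ)/(m.natAbs : ℂ) := by
  have hπ : (0:ℝ) < 2*π := by positivity
  set ρ : ℕ → ℝ := fun k => 1 - 1/(k+2) with hρ
  have hρhalf : ∀ k, 1/2 ≤ ρ k := by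
    intro k
    have h2 : (0:ℝ) < 2 := by norm_num
    have : 1/((k:ℝ)+2) ≤ 1/2 := by
      apply one_div_le_one_div_of_le h2
      have : (0:ℝ) ≤ k := Nat.cast_nonneg k
      linarith
    simp only [hρ]
    linarith
  have hρ0 : ∀ k, 0 ≤ ρ k := fun k => le_trans (by norm_num) (hρhalf k)
  have hρ1 : ∀ k, ρ k < 1 := by
    intro k
    have : (0:ℝ) < 1/((k:ℝ)+2) := by positivity
    simp only [hρ]
    linarith
  have hρlim : Tendsto ρ atTop (𝓝 1) := by
    have h0 : Tendsto (fun k : ℕ => ((k:ℝ)+2)) atTop atTop :=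
      tendsto_atTop_add_const_right _ 2 tendsto_natCast_atTop_atTop
    have h1 := tendsto_inv_atTop_zero.comp h0
    have h2 : Tendsto (fun k : ℕ => 1/((k:ℝ)+2)) atTop (𝓝 0) := by
      simpa [one_div, Function.comp_def] using h1
    rw [hρ]
    have h3 : Tendsto (fun k : ℕ => 1 - 1/((k:ℝ)+2)) atTop (𝓝 (1 - 0)) :=
      tendsto_const_nhds.sub h2
    simpa using h3
  set μ := volume.restrict (Set.Ioo (0:ℝ) (2*π)) with hμ
  set F : ℕ → ℝ → ℂ := fun k t =>
    ((Real.log (1 - 2*(ρ k)*Real.cos t + (ρ k)^2) : ℝ):ℂ) * Complex.exp (Complex.I * m * t)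
      with hF
  set f : ℝ → ℂ := fun t =>
    ((Real.log (2 - 2*Real.cos t) : ℝ):ℂ) * Complex.exp (Complex.I * m * t) with hf
  have hmeas : ∀ k, AEStronglyMeasurable (F k) μ := by
    intro k
    apply Measurable.aestronglyMeasurable
    apply Measurable.mul
    · exact Complex.measurable_ofReal.comp (Real.measurable_log.comp (by fun_prop))
    · fun_prop
  have hnorm : ∀ (x : ℝ) (t : ℝ), ‖((x:ℝ):ℂ) * Complex.exp (Complex.I * m * t)‖ = |x| := by
    intro x t
    rw [norm_mul, Complex.norm_real,
      show Complex.I * m * t = ((m*t : ℝ):ℂ) * Complex.I by push_cast; ring,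
      Complex.norm_exp_ofReal_mul_I, mul_one, Real.norm_eq_abs]
  have h_bound : ∀ k, ∀ᵐ t ∂μ, ‖F k t‖ ≤ B t := by
    intro k
    rw [hμ, ae_restrict_iff' measurableSet_Ioo]
    apply ae_of_all
    intro t ht
    rw [hF]
    simp only
    rw [hnorm]
    exact logBound (hρhalf k) (hρ1 k).le ht
  have h_lim : ∀ᵐ t ∂μ, Tendsto (fun k => F k t) atTop (𝓝 (f t)) := by
    rw [hμ, ae_restrict_iff' measurableSet_Ioo]
    apply ae_of_all
    intro t ht
    have hpos := (oneSubCosLower ht).2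
    have hinner : Tendsto (fun r : ℝ => 1 - 2*r*Real.cos t + r^2) (𝓝 1)
        (𝓝 (1 - 2*1*Real.cos t + 1^2)) := Continuous.tendsto (by fun_prop) 1
    have h2 : (1 - 2*1*Real.cos t + 1^2) = 2 - 2*Real.cos t := by ring
    rw [h2] at hinner
    have hlog : Tendsto Real.log (𝓝 (2 - 2*Real.cos t))
        (𝓝 (Real.log (2 - 2*Real.cos t))) :=
      (Real.continuousAt_log (by nlinarith)).tendsto
    have h1 : Tendsto (fun k => ((Real.log (1 - 2*(ρ k)*Real.cos t + (ρ k)^2) : ℝ):ℂ))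
        atTop (𝓝 ((Real.log (2 - 2*Real.cos t) : ℝ):ℂ)) :=
      (Complex.continuous_ofReal.tendsto _).comp (hlog.comp (hinner.comp hρlim))
    exact h1.mul_const _
  have DCT := MeasureTheory.tendsto_integral_filter_of_dominated_convergence B
    (Eventually.of_forall hmeas) (Eventually.of_forall h_bound) intB h_lim
  have hval : ∀ k, (∫ t, F k t ∂μ) = -2*(π:ℂ)*(((ρ k):ℂ)^m.natAbs)/(m.natAbs : ℂ) :=
    fun k => intR (hρ0 k) (hρ1 k) m
  have hVlim : Tendsto (fun k => -2*(π:ℂ)*(((ρ k):ℂ)^m.natAbs)/(m.natAbs : ℂ))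
      atTop (𝓝 (-2*(π:ℂ)/(m.natAbs : ℂ))) := by
    have h1 : Tendsto (fun k => ((ρ k : ℝ):ℂ)) atTop (𝓝 1) :=
      (Complex.continuous_ofReal.tendsto 1).comp hρlim
    have h2 := (h1.pow m.natAbs).const_mul ((-2*(π:ℂ))/(m.natAbs : ℂ))
    simp only [one_pow, mul_one] at h2
    convert h2 using 2 with k
    ring
  rw [funext hval] at DCT
  exact tendsto_nhds_unique DCT hVlim

theorem stmt0 (m : ℤ) :
    (1 / (2 * Real.pi) : ℂ) *
      ∫ t in (0:ℝ)..(2 * Real.pi),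
        (Real.log (4 * Real.sin (t / 2) ^ 2) : ℂ) * Complex.exp (Complex.I * m * t)
    = if m = 0 then 0 else -1 / ((|m| : ℤ) : ℂ) := by
  have hπ : (0:ℝ) ≤ 2*π := by positivity
  have hident : ∀ t : ℝ, 4 * Real.sin (t/2)^2 = 2 - 2*Real.cos t := by
    intro t
    have h := Real.cos_two_mul' (t/2)
    have h2 : 2*(t/2) = t := by ring
    rw [h2] at h
    have h3 := Real.sin_sq_add_cos_sq (t/2)
    linarith
  have hint : (∫ t in (0:ℝ)..(2 * Real.pi),
        (Real.log (4 * Real.sin (t / 2) ^ 2) : ℂ) * Complex.exp (Complex.I * m * t))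
      = -2*(π:ℂ)/(m.natAbs : ℂ) := by
    rw [intervalIntegral.integral_of_le hπ, MeasureTheory.integral_Ioc_eq_integral_Ioo]
    rw [show (fun t : ℝ => (Real.log (4 * Real.sin (t / 2) ^ 2) : ℂ) * Complex.exp (Complex.I * m * t))
        = fun t : ℝ => ((Real.log (2 - 2*Real.cos t) : ℝ):ℂ) * Complex.exp (Complex.I * m * t) by
      funext t; rw [hident t]]
    exact keyLimit m
  rw [hint]
  have habs : ((|m| : ℤ) : ℂ) = (m.natAbs : ℂ) := by
    rw [Int.abs_eq_natAbs, Int.cast_natCast]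
  have hfin : (1 / (2 * Real.pi) : ℂ) * (-2*(π:ℂ)/(m.natAbs : ℂ)) = -1 / (m.natAbs : ℂ) := by
    rcases eq_or_ne m.natAbs 0 with h | h
    · simp [h]
    · have hne : ((m.natAbs : ℕ):ℂ) ≠ 0 := by exact_mod_cast h
      have hπne : ((π:ℝ):ℂ) ≠ 0 := Complex.ofReal_ne_zero.mpr Real.pi_ne_zero
      field_simp
  split_ifs with hm
  · subst hm
    simp
  · rw [habs]
    exact hfin
end

section
/- For every integer m, I(m) := (1/(2π))∫₀^{2π} sin²(t/2) ln(4 sin²(t/2)) e^{imt} dt equals 1/2 if m = 0, equals −3/8 if m = ±1, and equals (1/4)(1/|m+1| + 1/|m−1| − 2/|m|) otherwise. -/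
open MeasureTheory Real Complex Filter Topology

noncomputable def C (r : ℝ) (n : ℤ) : ℂ := if n = 0 then 0 else -(2*Real.pi) * r^n.natAbs / n.natAbs

lemma int_exp (n : ℤ) : (∫ t in (0:ℝ)..(2*Real.pi), Complex.exp (Complex.I*n*t))
    = if n = 0 then (2*Real.pi : ℂ) else 0 := by
  rcases eq_or_ne n 0 with rfl | hn
  · simp
  · rw [if_neg hn]
    have hc : (Complex.I * n) ≠ 0 := by
      simp [Complex.I_ne_zero, hn]
    have := integral_exp_mul_complex (a := (0:ℝ)) (b := 2*Real.pi) hc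
    simp only [mul_assoc] at this ⊢
    rw [this]
    have h1 : Complex.exp (Complex.I * (n * (2*Real.pi))) = 1 := by
      rw [show Complex.I * (n * (2*Real.pi)) = n * (2 * Real.pi * Complex.I) by push_cast; ring]
      exact Complex.exp_int_mul_two_pi_mul_I n
    simp [h1]

lemma normSq_aux (r t : ℝ) : ‖(1 - r * Complex.exp (Complex.I * t))‖ ^ 2
    = 1 - 2*r*Real.cos t + r^2 := by
  rw [Complex.sq_norm, Complex.normSq_apply]
  simp [Complex.exp_re, Complex.exp_im, Complex.cos, Complex.sin]
  nlinarith [Real.sin_sq_add_cos_sq t]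

lemma hasSum_g {r : ℝ} (hr0 : 0 ≤ r) (hr1 : r < 1) (t : ℝ) :
    HasSum (fun k : ℕ => -(2 * r^k * Real.cos (k*t) / k))
      (Real.log (1 - 2*r*Real.cos t + r^2)) := by
  set z : ℂ := r * Complex.exp (Complex.I * t) with hz
  have hnz : ‖z‖ < 1 := by
    rw [hz]
    simp only [norm_mul, Complex.norm_real, Real.norm_eq_abs]
    rw [show ‖Complex.exp (Complex.I * t)‖ = 1 by
      rw [show Complex.I * t = (t:ℂ) * Complex.I by ring]
      simp [Complex.norm_exp_ofReal_mul_I]]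
    rw [mul_one, _root_.abs_of_nonneg hr0]; exact hr1
  have H := Complex.hasSum_taylorSeries_neg_log hnz
  have H2 := (Complex.hasSum_re H).mul_left (-2)
  have hre : ∀ k : ℕ, -(2 * r^k * Real.cos (k*t) / k) = (-2) * (z ^ k / k).re := by
    intro k
    rw [hz, mul_pow, ← Complex.exp_nat_mul]
    rw [show ((r:ℂ))^k = ((r^k : ℝ) : ℂ) by push_cast; ring]
    rw [Complex.div_natCast_re]
    rw [show ((r^k : ℝ) : ℂ) * Complex.exp ((k:ℂ) * (Complex.I * t)) = ((r^k : ℝ) : ℂ) * Complex.exp (((k*t : ℝ):ℂ) * Complex.I) by push_cast; ring_nf]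
    rw [Complex.re_ofReal_mul, Complex.exp_ofReal_mul_I_re]
    ring
  have hval : (-2) * (-Complex.log (1 - z)).re = Real.log (1 - 2*r*Real.cos t + r^2) := by
    rw [Complex.neg_re, Complex.log_re]
    rw [← normSq_aux r t, show ((1:ℂ) - r * Complex.exp (Complex.I * t)) = 1 - z from rfl]
    rw [Real.log_pow]
    push_cast; ring
  rw [← hval]
  exact H2.congr_fun hre

lemma int_cos_exp (k : ℕ) (n : ℤ) :
    (∫ t in (0:ℝ)..(2*Real.pi), ((Real.cos (k*t) : ℝ) : ℂ) * Complex.exp (Complex.I*n*t))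
    = ((if n + k = 0 then (2*Real.pi:ℂ) else 0) + (if n - k = 0 then (2*Real.pi:ℂ) else 0))/2 := by
  have key : ∀ t : ℝ, ((Real.cos (k*t) : ℝ) : ℂ) * Complex.exp (Complex.I*n*t)
      = (Complex.exp (Complex.I*((n+k : ℤ) : ℂ)*t) + Complex.exp (Complex.I*((n-k : ℤ) : ℂ)*t))/2 := by
    intro t
    rw [show Complex.I*((n+k : ℤ):ℂ)*t = Complex.I*n*t + (k*t:ℝ)*Complex.I by push_cast; ring,
        show Complex.I*((n-k : ℤ):ℂ)*t = Complex.I*n*t + (-(k*t:ℝ))*Complex.I by push_cast; ring,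
        Complex.exp_add, Complex.exp_add, Complex.exp_mul_I, Complex.exp_mul_I]
    rw [show ((-(k*t:ℝ)) : ℂ) = -((k*t : ℝ) : ℂ) by push_cast; ring]
    rw [Complex.cos_neg, Complex.sin_neg, ← Complex.ofReal_cos]
    ring
  rw [intervalIntegral.integral_congr (fun t _ => key t)]
  rw [intervalIntegral.integral_div, intervalIntegral.integral_add]
  · rw [int_exp (n+k), int_exp (n-k)]
  · apply Continuous.intervalIntegrable; continuity
  · apply Continuous.intervalIntegrable; continuity

lemma int_g {r : ℝ} (hr0 : 0 ≤ r) (hr1 : r < 1) (n : ℤ) :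
    (∫ t in (0:ℝ)..(2*Real.pi),
        ((Real.log (1 - 2*r*Real.cos t + r^2) : ℝ) : ℂ) * Complex.exp (Complex.I*n*t))
    = C r n := by
  simp only [C]
  set F : ℕ → ℝ → ℂ := fun k t =>
    ((-(2 * r^k * Real.cos (k*t) / k) : ℝ) : ℂ) * Complex.exp (Complex.I*n*t) with hF
  have hcontF : ∀ k, Continuous (F k) := by
    intro k; rw [hF]
    exact (Complex.continuous_ofReal.comp (by continuity)).mul (by continuity)
  have hptws : ∀ t : ℝ, ((Real.log (1 - 2*r*Real.cos t + r^2) : ℝ) : ℂ) * Complex.exp (Complex.I*n*t)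
      = ∑' k, F k t := by
    intro t
    have h1 := (Complex.hasSum_ofReal.mpr (hasSum_g hr0 hr1 t)).mul_right
      (Complex.exp (Complex.I*n*t))
    exact h1.tsum_eq.symm
  rw [intervalIntegral.integral_of_le (by positivity : (0:ℝ) ≤ 2*Real.pi)]
  simp only [hptws]
  rw [← MeasureTheory.integral_tsum_of_summable_integral_norm]
  rotate_left
  · exact fun k => (hcontF k).integrableOn_Ioc
  · apply Summable.of_nonneg_of_le (fun k => integral_nonneg (fun t => norm_nonneg _))
      (fun k => ?_) ((summable_geometric_of_lt_one hr0 hr1).mul_left (2*Real.pi*2))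
    have hb : ∀ t ∈ Set.Ioc (0:ℝ) (2*Real.pi), ‖F k t‖ ≤ 2 * r^k := by
      intro t _
      rw [hF]
      simp only [norm_mul, Complex.norm_real, Real.norm_eq_abs]
      rw [show Complex.I*(n:ℂ)*t = ((n*t : ℝ):ℂ)*Complex.I by push_cast; ring,
          Complex.norm_exp_ofReal_mul_I, mul_one]
      rcases Nat.eq_zero_or_pos k with rfl | hk
      · simp
      · rw [abs_neg, abs_div, Nat.abs_cast, abs_mul, abs_mul, _root_.abs_two,
          _root_.abs_of_nonneg (pow_nonneg hr0 k)]
        have h1 : (1:ℝ) ≤ (k:ℝ) := by exact_mod_cast hk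
        calc 2 * r^k * |Real.cos (k*t)| / (k:ℝ) ≤ 2 * r^k * 1 / 1 := by
              gcongr
              · exact Real.abs_cos_le_one _
          _ = 2 * r^k := by ring
    calc (∫ t in Set.Ioc (0:ℝ) (2*Real.pi), ‖F k t‖)
        ≤ ∫ _ in Set.Ioc (0:ℝ) (2*Real.pi), 2*r^k := by
          apply setIntegral_mono_on ((hcontF k).norm.integrableOn_Ioc)
            (integrableOn_const measure_Ioc_lt_top.ne) measurableSet_Ioc hb
      _ = 2*Real.pi*2*r^k := by
          rw [setIntegral_const, measureReal_def, Real.volume_Ioc, smul_eq_mul,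
            ENNReal.toReal_ofReal (by norm_num [Real.pi_pos.le])]
          ring
  · have hFk : ∀ k : ℕ, (∫ t in Set.Ioc (0:ℝ) (2*Real.pi), F k t)
        = ((-(2 * r^k / k) : ℝ) : ℂ) *
          (((if n + k = 0 then (2*Real.pi:ℂ) else 0) + (if n - k = 0 then (2*Real.pi:ℂ) else 0))/2) := by
      intro k
      rw [← intervalIntegral.integral_of_le (by positivity : (0:ℝ) ≤ 2*Real.pi)]
      rw [← int_cos_exp k n, ← intervalIntegral.integral_const_mul]
      apply intervalIntegral.integral_congr
      intro t _
      rw [hF]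
      push_cast
      ring
    rw [tsum_eq_single n.natAbs]
    · rw [hFk]
      rcases lt_trichotomy n 0 with hn | rfl | hn
      · rw [if_neg hn.ne]
        rw [if_pos (by omega : n + (n.natAbs : ℤ) = 0), if_neg (by omega : n - (n.natAbs : ℤ) ≠ 0)]
        have ha : ((n.natAbs : ℝ) : ℂ) ≠ 0 := by
          simp only [ne_eq, Complex.ofReal_eq_zero, Nat.cast_eq_zero]
          omega
        push_cast at ha ⊢
        field_simp
        ring
      · simp
      · rw [if_neg hn.ne']
        rw [if_neg (by omega : n + (n.natAbs : ℤ) ≠ 0), if_pos (by omega : n - (n.natAbs : ℤ) = 0)]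
        have ha : ((n.natAbs : ℝ) : ℂ) ≠ 0 := by
          simp only [ne_eq, Complex.ofReal_eq_zero, Nat.cast_eq_zero]
          omega
        push_cast at ha ⊢
        field_simp
        ring
    · intro k hk
      rw [hFk]
      rw [if_neg (by omega : n + (k : ℤ) ≠ 0), if_neg (by omega : n - (k : ℤ) ≠ 0)]
      simp

lemma cont_g {r : ℝ} (hr0 : 0 ≤ r) (hr1 : r < 1) :
    Continuous (fun t : ℝ => Real.log (1 - 2*r*Real.cos t + r^2)) := by
  apply Continuous.log (by continuity)
  intro t
  have h1 := Real.neg_one_le_cos t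
  have h2 := Real.cos_le_one t
  nlinarith

lemma int_F {r : ℝ} (hr0 : 0 ≤ r) (hr1 : r < 1) (m : ℤ) :
    (∫ t in (0:ℝ)..(2*Real.pi),
        ((Real.sin (t/2)^2 * Real.log (1 - 2*r*Real.cos t + r^2) : ℝ) : ℂ) * Complex.exp (Complex.I*m*t))
    = (1/2) * C r m - (1/4) * C r (m+1) - (1/4) * C r (m-1) := by
  have hg := cont_g hr0 hr1
  have key : ∀ t : ℝ, ((Real.sin (t/2)^2 * Real.log (1 - 2*r*Real.cos t + r^2) : ℝ) : ℂ) * Complex.exp (Complex.I*m*t)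
      = (1/2) * (((Real.log (1 - 2*r*Real.cos t + r^2) : ℝ) : ℂ) * Complex.exp (Complex.I*m*t))
      - (1/4) * (((Real.log (1 - 2*r*Real.cos t + r^2) : ℝ) : ℂ) * Complex.exp (Complex.I*((m+1 : ℤ) : ℂ)*t))
      - (1/4) * (((Real.log (1 - 2*r*Real.cos t + r^2) : ℝ) : ℂ) * Complex.exp (Complex.I*((m-1 : ℤ) : ℂ)*t)) := by
    intro t
    have hsin : (Real.sin (t/2)^2 : ℝ) = 1/2 - Real.cos t / 2 := by
      rw [Real.sin_sq_eq_half_sub]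
      rw [show 2*(t/2) = t by ring]
    have hcos : ((Real.cos t : ℝ) : ℂ) * Complex.exp (Complex.I*m*t)
        = (Complex.exp (Complex.I*((m+1 : ℤ) : ℂ)*t) + Complex.exp (Complex.I*((m-1 : ℤ) : ℂ)*t))/2 := by
      rw [show Complex.I*((m+1 : ℤ):ℂ)*t = Complex.I*m*t + (t:ℂ)*Complex.I by push_cast; ring,
          show Complex.I*((m-1 : ℤ):ℂ)*t = Complex.I*m*t + (-(t:ℝ):ℂ)*Complex.I by push_cast; ring,
          Complex.exp_add, Complex.exp_add, Complex.exp_mul_I, Complex.exp_mul_I]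
      rw [show ((-(t:ℝ)) : ℂ) = -((t : ℝ) : ℂ) by push_cast; ring]
      rw [Complex.cos_neg, Complex.sin_neg, ← Complex.ofReal_cos]
      ring
    rw [hsin]
    rw [Complex.ofReal_cos] at hcos
    push_cast
    set L : ℂ := ((Real.log (1 - 2*r*Real.cos t + r^2) : ℝ) : ℂ)
    set E := Complex.exp (Complex.I*m*t)
    calc ((1:ℂ)/2 - Complex.cos (t:ℂ)/2) * L * E
        = L * E * (1/2) - (1/2) * L * (Complex.cos (t:ℂ) * E) := by push_cast; ring
      _ = _ := by rw [hcos]; push_cast; ring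
  rw [intervalIntegral.integral_congr (fun t _ => key t)]
  have i1 : IntervalIntegrable (fun t : ℝ => ((Real.log (1 - 2*r*Real.cos t + r^2) : ℝ) : ℂ) * Complex.exp (Complex.I*m*t)) volume 0 (2*Real.pi) := by
    apply Continuous.intervalIntegrable
    exact (Complex.continuous_ofReal.comp hg).mul (by continuity)
  have i2 : IntervalIntegrable (fun t : ℝ => ((Real.log (1 - 2*r*Real.cos t + r^2) : ℝ) : ℂ) * Complex.exp (Complex.I*((m+1:ℤ):ℂ)*t)) volume 0 (2*Real.pi) := by
    apply Continuous.intervalIntegrable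
    exact (Complex.continuous_ofReal.comp hg).mul (by continuity)
  have i3 : IntervalIntegrable (fun t : ℝ => ((Real.log (1 - 2*r*Real.cos t + r^2) : ℝ) : ℂ) * Complex.exp (Complex.I*((m-1:ℤ):ℂ)*t)) volume 0 (2*Real.pi) := by
    apply Continuous.intervalIntegrable
    exact (Complex.continuous_ofReal.comp hg).mul (by continuity)
  rw [intervalIntegral.integral_sub ((i1.const_mul _).sub (i2.const_mul _)) (i3.const_mul _),
      intervalIntegral.integral_sub (i1.const_mul _) (i2.const_mul _),
      intervalIntegral.integral_const_mul, intervalIntegral.integral_const_mul,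
      intervalIntegral.integral_const_mul,
      int_g hr0 hr1 m, int_g hr0 hr1 (m+1), int_g hr0 hr1 (m-1)]

lemma sin_half_sq (t : ℝ) : Real.sin (t/2)^2 = 1/2 - Real.cos t/2 := by
  rw [Real.sin_sq_eq_half_sub, show 2*(t/2) = t by ring]

lemma bound_aux {x u : ℝ} (hx0 : 0 ≤ x) (hx1 : x ≤ 1) (hxu : x ≤ u) (hu4 : u ≤ 4) :
    |x * Real.log u| ≤ 3 := by
  rcases eq_or_lt_of_le hx0 with rfl | hx0'
  · simp
  have hu0 : 0 < u := lt_of_lt_of_le hx0' hxu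
  rw [abs_mul, _root_.abs_of_nonneg hx0]
  rcases le_or_gt 1 u with h1 | h1
  · rw [_root_.abs_of_nonneg (Real.log_nonneg h1)]
    have : Real.log u ≤ 3 := by
      have := Real.log_le_sub_one_of_pos hu0
      linarith
    nlinarith
  · rw [_root_.abs_of_nonpos (Real.log_nonpos hu0.le h1.le)]
    have h2 : -Real.log u ≤ -Real.log x := by
      have := Real.log_le_log hx0' hxu
      linarith
    have h3 : -Real.log x = Real.log x⁻¹ := by rw [Real.log_inv]
    have h4 : Real.log x⁻¹ ≤ x⁻¹ - 1 := Real.log_le_sub_one_of_pos (by positivity)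
    have h5 : x * -Real.log u ≤ x * (x⁻¹ - 1) := by
      apply mul_le_mul_of_nonneg_left _ hx0
      rw [h3] at h2; linarith
    have h6 : x * (x⁻¹ - 1) = 1 - x := by field_simp
    linarith

lemma x_le_u {r c : ℝ} (hr0 : 0 ≤ r) (hr1 : r ≤ 1) (hc : -1 ≤ c) (hc1 : c ≤ 1) :
    1/2 - c/2 ≤ 1 - 2*r*c + r^2 := by
  nlinarith [mul_nonneg (by linarith : (0:ℝ) ≤ 1+c) (sq_nonneg (1-r)),
             mul_nonneg (by linarith : (0:ℝ) ≤ 1-c) (sq_nonneg r)]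

lemma dct (m : ℤ) :
    (∫ t in (0:ℝ)..(2*Real.pi),
        ((Real.sin (t / 2) ^ 2 * Real.log (4 * Real.sin (t / 2) ^ 2) : ℝ) : ℂ) *
          Complex.exp (Complex.I * m * t))
    = (1/2) * C 1 m - (1/4) * C 1 (m+1) - (1/4) * C 1 (m-1) := by
  set r : ℕ → ℝ := fun j => 1 - 1/(j+1) with hr
  have hr0 : ∀ j, 0 ≤ r j := by
    intro j
    have : 1/((j:ℝ)+1) ≤ 1 := by
      rw [div_le_one (by positivity)]
      simp
    simp only [hr]; linarith
  have hr1 : ∀ j, r j < 1 := by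
    intro j
    have : 0 < 1/((j:ℝ)+1) := by positivity
    simp only [hr]; linarith
  have hrlim : Filter.Tendsto r atTop (𝓝 1) := by
    rw [hr]
    have h2 := (tendsto_one_div_add_atTop_nhds_zero_nat (𝕜 := ℝ)).const_sub 1
    simpa using h2
  have hexp : Continuous fun t : ℝ => Complex.exp (Complex.I*(m:ℂ)*(t:ℂ)) :=
    Complex.continuous_exp.comp (continuous_const.mul Complex.continuous_ofReal)
  have hsin2 : Continuous fun t : ℝ => Real.sin (t/2)^2 :=
    (Real.continuous_sin.comp (continuous_id.div_const 2)).pow 2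
  have hnormexp : ∀ t : ℝ, ‖Complex.exp (Complex.I*(m:ℂ)*(t:ℂ))‖ = 1 := by
    intro t
    rw [show Complex.I*(m:ℂ)*(t:ℂ) = ((m*t : ℝ):ℂ)*Complex.I by push_cast; ring,
      Complex.norm_exp_ofReal_mul_I]
  set F : ℕ → ℝ → ℂ := fun j t =>
    ((Real.sin (t/2)^2 * Real.log (1 - 2*(r j)*Real.cos t + (r j)^2) : ℝ) : ℂ) * Complex.exp (Complex.I*m*t) with hF
  set f : ℝ → ℂ := fun t =>
    ((Real.sin (t / 2) ^ 2 * Real.log (4 * Real.sin (t / 2) ^ 2) : ℝ) : ℂ) * Complex.exp (Complex.I * m * t) with hf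
  have key : Filter.Tendsto (fun j => ∫ t in Set.Ioc (0:ℝ) (2*Real.pi), F j t) atTop
      (𝓝 (∫ t in Set.Ioc (0:ℝ) (2*Real.pi), f t)) := by
    apply MeasureTheory.tendsto_integral_filter_of_dominated_convergence (fun _ => (3:ℝ))
    · apply Filter.Eventually.of_forall
      intro j
      exact ((Complex.continuous_ofReal.comp (hsin2.mul (cont_g (hr0 j) (hr1 j)))).mul hexp).aestronglyMeasurable
    · apply Filter.Eventually.of_forall
      intro j
      apply Filter.Eventually.of_forall
      intro t
      rw [hF]
      simp only [norm_mul, Complex.norm_real, Real.norm_eq_abs]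
      rw [hnormexp t, mul_one, ← abs_mul]
      have hc1 := Real.neg_one_le_cos t
      have hc2 := Real.cos_le_one t
      apply bound_aux (sq_nonneg _) (Real.sin_sq_le_one _)
      · rw [sin_half_sq]
        exact x_le_u (hr0 j) (hr1 j).le hc1 hc2
      · nlinarith [hr0 j, (hr1 j).le]
    · exact integrable_const 3
    · have h2pi : ∀ᵐ t : ℝ ∂(volume.restrict (Set.Ioc (0:ℝ) (2*Real.pi))), t ≠ 2*Real.pi := by
        apply ae_restrict_of_ae
        rw [MeasureTheory.ae_iff]
        simp only [not_ne_iff]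
        rw [show {t : ℝ | t = 2*Real.pi} = {2*Real.pi} from Set.setOf_eq_eq_singleton]
        exact measure_singleton _
      filter_upwards [ae_restrict_mem measurableSet_Ioc, h2pi] with t ht hne
      have hcos : Real.cos t ≠ 1 := by
        intro hc
        have hlt : t < 2*Real.pi := lt_of_le_of_ne ht.2 hne
        have := (Real.cos_eq_one_iff_of_lt_of_lt (by linarith [ht.1, Real.pi_pos] : -(2*Real.pi) < t) hlt).mp hc
        exact absurd this ht.1.ne'
      have hpos : 0 < 4 * Real.sin (t/2)^2 := by
        rw [sin_half_sq]
        have := Real.cos_le_one t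
        rcases lt_or_eq_of_le this with h | h
        · linarith
        · exact absurd h hcos
      have hu : Filter.Tendsto (fun j => 1 - 2*(r j)*Real.cos t + (r j)^2) atTop
          (𝓝 (4 * Real.sin (t/2)^2)) := by
        have heq : (4 : ℝ) * Real.sin (t/2)^2 = 1 - 2*1*Real.cos t + 1^2 := by
          rw [sin_half_sq]; ring
        rw [heq]
        exact Tendsto.add (Tendsto.sub tendsto_const_nhds
          (Tendsto.mul_const (Real.cos t) (hrlim.const_mul 2))) (hrlim.pow 2)
      have hlog := (Real.continuousAt_log hpos.ne').tendsto.comp hu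
      have h2 : Filter.Tendsto (fun j => Real.sin (t/2)^2 * Real.log (1 - 2*(r j)*Real.cos t + (r j)^2))
          atTop (𝓝 (Real.sin (t/2)^2 * Real.log (4*Real.sin (t/2)^2))) := hlog.const_mul _
      exact ((Complex.continuous_ofReal.tendsto _).comp h2).mul_const (Complex.exp (Complex.I*m*t))
  have hC : ∀ n : ℤ, Filter.Tendsto (fun j => C (r j) n) atTop (𝓝 (C 1 n)) := by
    intro n
    rcases eq_or_ne n 0 with rfl | hn
    · simp only [C, if_pos rfl]
      exact tendsto_const_nhds
    · simp only [C, if_neg hn]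
      have h1 : Filter.Tendsto (fun j => ((r j : ℝ) : ℂ)) atTop (𝓝 (1:ℂ)) := by
        exact (Complex.continuous_ofReal.tendsto 1).comp hrlim
      have := ((h1.pow n.natAbs).const_mul (-(2*Real.pi : ℂ))).div_const (n.natAbs : ℂ)
      simpa using this
  have keyR : Filter.Tendsto (fun j => ∫ t in Set.Ioc (0:ℝ) (2*Real.pi), F j t) atTop
      (𝓝 ((1/2) * C 1 m - (1/4) * C 1 (m+1) - (1/4) * C 1 (m-1))) := by
    have heq : (fun j => ∫ t in Set.Ioc (0:ℝ) (2*Real.pi), F j t)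
        = fun j => (1/2) * C (r j) m - (1/4) * C (r j) (m+1) - (1/4) * C (r j) (m-1) := by
      funext j
      rw [← intervalIntegral.integral_of_le (by positivity : (0:ℝ) ≤ 2*Real.pi)]
      exact int_F (hr0 j) (hr1 j) m
    rw [heq]
    exact Tendsto.sub (Tendsto.sub ((hC m).const_mul _) ((hC (m+1)).const_mul _)) ((hC (m-1)).const_mul _)
  have := tendsto_nhds_unique key keyR
  rw [intervalIntegral.integral_of_le (by positivity : (0:ℝ) ≤ 2*Real.pi)]
  exact this

lemma arith (p a b c : ℂ) (hp : p ≠ 0) :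
    1/(2*p) * (1/2 * (-(2*p)/c) - 1/4 * (-(2*p)/a) - 1/4 * (-(2*p)/b)) = 1/4 * (1/a + 1/b - 2/c) := by
  rw [show 1/(2*p) * (1/2 * (-(2*p)/c) - 1/4 * (-(2*p)/a) - 1/4 * (-(2*p)/b))
      = (p * p⁻¹) * (1/4 * (1/a + 1/b - 2/c)) by ring]
  rw [mul_inv_cancel₀ hp, one_mul]

theorem stmt1 (m : ℤ) :
    (1 / (2 * Real.pi) : ℂ) *
      ∫ t in (0:ℝ)..(2 * Real.pi),
        ((Real.sin (t / 2) ^ 2 * Real.log (4 * Real.sin (t / 2) ^ 2) : ℝ) : ℂ) *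
          Complex.exp (Complex.I * m * t)
    = if m = 0 then 1 / 2
      else if m = 1 ∨ m = -1 then -(3 / 8)
      else (1 / 4) * (1 / ((|m + 1| : ℤ) : ℂ) + 1 / ((|m - 1| : ℤ) : ℂ) - 2 / ((|m| : ℤ) : ℂ)) := by
  rw [dct m]
  have hπ : (Real.pi : ℂ) ≠ 0 := by exact_mod_cast Real.pi_ne_zero
  rcases eq_or_ne m 0 with rfl | hm0
  · rw [if_pos rfl]
    norm_num [C]
    field_simp
    ring
  rcases eq_or_ne m 1 with rfl | hm1
  · norm_num [C]
    field_simp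
    ring
  rcases eq_or_ne m (-1) with rfl | hmn1
  · norm_num [C]
    field_simp
    ring
  rw [if_neg hm0, if_neg (by tauto)]
  have h1 : m + 1 ≠ 0 := by omega
  have h2 : m - 1 ≠ 0 := by omega
  rw [C, C, C, if_neg hm0, if_neg h1, if_neg h2]
  have e1 : ((|m + 1| : ℤ) : ℂ) = ((m+1).natAbs : ℂ) := by
    rw [Int.abs_eq_natAbs, Int.cast_natCast]
  have e2 : ((|m - 1| : ℤ) : ℂ) = ((m-1).natAbs : ℂ) := by
    rw [Int.abs_eq_natAbs, Int.cast_natCast]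
  have e3 : ((|m| : ℤ) : ℂ) = (m.natAbs : ℂ) := by
    rw [Int.abs_eq_natAbs, Int.cast_natCast]
  have n1 : ((m+1).natAbs : ℂ) ≠ 0 := by
    simp only [ne_eq, Nat.cast_eq_zero, Int.natAbs_eq_zero]; exact h1
  have n2 : ((m-1).natAbs : ℂ) ≠ 0 := by
    simp only [ne_eq, Nat.cast_eq_zero, Int.natAbs_eq_zero]; exact h2
  have n3 : ((m).natAbs : ℂ) ≠ 0 := by
    simp only [ne_eq, Nat.cast_eq_zero, Int.natAbs_eq_zero]; exact hm0
  rw [e1, e2, e3]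
  simp only [Complex.ofReal_one, one_pow, mul_one]
  generalize hA : ((m+1).natAbs : ℂ) = a at n1 ⊢
  generalize hB : ((m-1).natAbs : ℂ) = b at n2 ⊢
  generalize hC : ((m).natAbs : ℂ) = c at n3 ⊢
  exact arith _ a b c hπ
end

section
/- Let Λ̃₀ be the Fourier multiplier on 2π-periodic functions defined by (Λ̃₀φ)(t) = Σ_{n≠0} (σ₀(N_κ)(n)/|n| + 1/2) φ̂(n) e^{int}, where σ₀(N_κ)(n) = −(1/2)√(n²−κ²) with κ = κ₁+iε, κ₁,ε > 0 and the branch of the square root chosen so that Im σ₀(N_κ)(n) > 0. Then Λ̃₀ is a bounded linear operator from H^p[0,2π] to H^{p+2}[0,2π] for every p ∈ ℝ. -/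
open MeasureTheory Real Complex Filter Topology

/-- Periodic Sobolev norm of order p. -/
noncomputable def sobNorm (p : ℝ) (φ : ℝ → ℂ) : ℝ :=
  (∑' m : ℤ, (1 + (m : ℝ) ^ 2) ^ p * ‖fCoeff φ m‖ ^ 2) ^ (1 / 2 : ℝ)

lemma norm_exp_I_int_mul (k : ℤ) (t : ℝ) : ‖Complex.exp (Complex.I * k * t)‖ = 1 := by
  rw [Complex.norm_exp]
  simp [Complex.mul_re]

lemma integral_exp_I_int (k : ℤ) :
    ∫ t in (0:ℝ)..(2*Real.pi), Complex.exp (Complex.I * k * t)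
      = if k = 0 then (((2*Real.pi : ℝ)) : ℂ) else 0 := by
  by_cases hk : k = 0
  · simp [hk]
  · have hc : Complex.I * (k:ℂ) ≠ 0 :=
      mul_ne_zero Complex.I_ne_zero (by exact_mod_cast hk)
    rw [integral_exp_mul_complex hc, if_neg hk]
    have h1 : Complex.I * (k:ℂ) * (((2*Real.pi : ℝ)):ℂ) = (k:ℂ) * (2*(Real.pi:ℂ)*Complex.I) := by
      push_cast; ring
    rw [h1, Complex.exp_int_mul_two_pi_mul_I]
    simp

lemma fCoeff_tsum (a : ℤ → ℂ) (ha : Summable fun n => ‖a n‖) (m : ℤ) :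
    fCoeff (fun t => ∑' n : ℤ, a n * Complex.exp (Complex.I * n * t)) m = a m := by
  have h2pi : (0:ℝ) ≤ 2*Real.pi := by positivity
  have hnrm : ∀ (n : ℤ) (t : ℝ), ‖a n * Complex.exp (Complex.I * ((n:ℂ) - (m:ℂ)) * t)‖ = ‖a n‖ := by
    intro n t
    rw [norm_mul]
    have h := norm_exp_I_int_mul (n - m) t
    push_cast at h
    rw [h, mul_one]
  have hint : ∀ n : ℤ, IntegrableOn
      (fun t : ℝ => a n * Complex.exp (Complex.I * ((n:ℂ) - (m:ℂ)) * t)) (Set.Ioc 0 (2*Real.pi)) := by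
    intro n
    exact ((by fun_prop : Continuous fun t : ℝ =>
      a n * Complex.exp (Complex.I * ((n:ℂ) - (m:ℂ)) * t)).integrableOn_Ioc)
  have hsum : Summable fun n : ℤ =>
      ∫ t in Set.Ioc (0:ℝ) (2*Real.pi), ‖a n * Complex.exp (Complex.I * ((n:ℂ) - (m:ℂ)) * t)‖ := by
    have : ∀ n : ℤ, (∫ t in Set.Ioc (0:ℝ) (2*Real.pi),
        ‖a n * Complex.exp (Complex.I * ((n:ℂ) - (m:ℂ)) * t)‖) = (2*Real.pi) * ‖a n‖ := by
      intro n
      simp_rw [hnrm n]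
      rw [setIntegral_const]
      simp [Real.volume_Ioc, ENNReal.toReal_ofReal h2pi, Real.pi_pos.le]
    simp_rw [this]
    exact ha.mul_left _
  have hptw : ∀ t : ℝ, (∑' n : ℤ, a n * Complex.exp (Complex.I * n * t)) *
      Complex.exp (-(Complex.I) * m * t)
      = ∑' n : ℤ, a n * Complex.exp (Complex.I * ((n:ℂ) - (m:ℂ)) * t) := by
    intro t
    rw [← tsum_mul_right]
    exact tsum_congr fun n => by
      rw [mul_assoc, ← Complex.exp_add]
      congr 2
      ring
  unfold fCoeff
  simp_rw [hptw]
  rw [intervalIntegral.integral_of_le h2pi,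
    ← MeasureTheory.integral_tsum_of_summable_integral_norm hint hsum]
  have heval : ∀ n : ℤ,
      (∫ t in Set.Ioc (0:ℝ) (2*Real.pi), a n * Complex.exp (Complex.I * ((n:ℂ) - (m:ℂ)) * t))
      = a n * (if n = m then (((2*Real.pi:ℝ)):ℂ) else 0) := by
    intro n
    rw [MeasureTheory.integral_const_mul]
    congr 1
    rw [← intervalIntegral.integral_of_le h2pi]
    have h := integral_exp_I_int (n - m)
    push_cast at h
    rw [h]
    simp [sub_eq_zero]
  simp_rw [heval]
  rw [tsum_eq_single m (fun n hn => by simp [hn])]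
  have hπ : ((Real.pi : ℝ) : ℂ) ≠ 0 := Complex.ofReal_ne_zero.mpr Real.pi_ne_zero
  simp only [if_pos rfl]
  push_cast
  field_simp


lemma sobNorm_nonneg (p : ℝ) (φ : ℝ → ℂ) : 0 ≤ sobNorm p φ :=
  Real.rpow_nonneg (tsum_nonneg fun m => by positivity) _

lemma main_bound (mul : ℤ → ℂ) (K δ : ℝ) (hδ : 0 < δ)
    (hub : ∀ m : ℤ, ‖mul m‖ * (1 + (m:ℝ)^2) ≤ K)
    (hlb : ∀ m : ℤ, m ≠ 0 → δ ≤ ‖mul m‖ * (1 + (m:ℝ)^2))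
    (p : ℝ) (φ : ℝ → ℂ) :
    sobNorm (p+2) (fun t => ∑' n : ℤ, mul n * fCoeff φ n * Complex.exp (Complex.I * n * t))
      ≤ K * sobNorm p φ := by
  have hK0 : (0:ℝ) ≤ K := le_trans (by positivity) (hub 0)
  by_cases ha : Summable fun n : ℤ => ‖mul n * fCoeff φ n‖
  · have hco : ∀ m : ℤ,
        fCoeff (fun t => ∑' n : ℤ, mul n * fCoeff φ n * Complex.exp (Complex.I * n * t)) m
          = mul m * fCoeff φ m := fun m => fCoeff_tsum (fun n => mul n * fCoeff φ n) ha m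
    unfold sobNorm
    simp only [hco]
    by_cases hS : Summable fun m : ℤ => (1 + (m:ℝ)^2)^p * ‖fCoeff φ m‖^2
    · -- termwise estimate
      have key : ∀ m : ℤ, (1 + (m:ℝ)^2)^(p+2) * ‖mul m * fCoeff φ m‖^2
          ≤ K^2 * ((1 + (m:ℝ)^2)^p * ‖fCoeff φ m‖^2) := by
        intro m
        have h1 : (0:ℝ) < 1 + (m:ℝ)^2 := by positivity
        have hsplit : (1 + (m:ℝ)^2)^(p+2) = (1 + (m:ℝ)^2)^p * (1 + (m:ℝ)^2)^(2:ℕ) := by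
          rw [← Real.rpow_natCast (1 + (m:ℝ)^2) 2, ← Real.rpow_add h1]
          norm_num
        rw [hsplit, norm_mul]
        have hb := hub m
        have hX : (0:ℝ) < (1 + (m:ℝ)^2)^p := Real.rpow_pos_of_pos h1 p
        have hsq : (‖mul m‖ * (1 + (m:ℝ)^2))^2 ≤ K^2 :=
          pow_le_pow_left₀ (mul_nonneg (norm_nonneg (mul m)) h1.le) hb 2
        nlinarith [sq_nonneg ‖fCoeff φ m‖, mul_le_mul_of_nonneg_left hsq
          (mul_nonneg hX.le (sq_nonneg ‖fCoeff φ m‖))]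
      have hLS : Summable fun m : ℤ => (1 + (m:ℝ)^2)^(p+2) * ‖mul m * fCoeff φ m‖^2 :=
        Summable.of_nonneg_of_le (fun m => by positivity) key (hS.mul_left _)
      have hle := Summable.tsum_le_tsum key hLS (hS.mul_left _)
      rw [tsum_mul_left] at hle
      have h12 : (0:ℝ) ≤ 1/2 := by norm_num
      calc (∑' m : ℤ, (1 + (m:ℝ)^2)^(p+2) * ‖mul m * fCoeff φ m‖^2) ^ (1/2:ℝ)
          ≤ (K^2 * ∑' m : ℤ, (1 + (m:ℝ)^2)^p * ‖fCoeff φ m‖^2) ^ (1/2:ℝ) :=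
            Real.rpow_le_rpow (tsum_nonneg fun m => by positivity) hle h12
        _ = K * (∑' m : ℤ, (1 + (m:ℝ)^2)^p * ‖fCoeff φ m‖^2) ^ (1/2:ℝ) := by
            rw [Real.mul_rpow (sq_nonneg K) (tsum_nonneg fun m => by positivity)]
            congr 1
            rw [← Real.sqrt_eq_rpow, Real.sqrt_sq hK0]
    · -- RHS not summable; show LHS series not summable either
      have hnotL : ¬ Summable fun m : ℤ => (1 + (m:ℝ)^2)^(p+2) * ‖mul m * fCoeff φ m‖^2 := by
        intro hL
        apply hS
        have hmaj : ∀ m : ℤ, (1 + (m:ℝ)^2)^p * ‖fCoeff φ m‖^2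
            ≤ (1/δ^2) * ((1 + (m:ℝ)^2)^(p+2) * ‖mul m * fCoeff φ m‖^2)
              + (if m = 0 then ‖fCoeff φ 0‖^2 else 0) := by
          intro m
          by_cases hm : m = 0
          · subst hm
            simp only [if_pos rfl]
            have : ((0:ℤ):ℝ) = 0 := by norm_num
            rw [this]
            norm_num
            positivity
          · rw [if_neg hm, add_zero]
            have h1 : (0:ℝ) < 1 + (m:ℝ)^2 := by positivity
            have hsplit : (1 + (m:ℝ)^2)^(p+2) = (1 + (m:ℝ)^2)^p * (1 + (m:ℝ)^2)^(2:ℕ) := by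
              rw [← Real.rpow_natCast (1 + (m:ℝ)^2) 2, ← Real.rpow_add h1]
              norm_num
            rw [hsplit, norm_mul]
            have hb := hlb m hm
            have hX : (0:ℝ) < (1 + (m:ℝ)^2)^p := Real.rpow_pos_of_pos h1 p
            have hsq : δ^2 ≤ (‖mul m‖ * (1 + (m:ℝ)^2))^2 :=
              pow_le_pow_left₀ hδ.le hb 2
            rw [← sub_nonneg]
            have expand : (1/δ^2) * ((1 + (m:ℝ)^2)^p * (1 + (m:ℝ)^2)^(2:ℕ)
                * (‖mul m‖ * ‖fCoeff φ m‖)^2) - (1 + (m:ℝ)^2)^p * ‖fCoeff φ m‖^2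
                = (1/δ^2) * ((1 + (m:ℝ)^2)^p * ‖fCoeff φ m‖^2)
                  * ((‖mul m‖ * (1 + (m:ℝ)^2))^2 - δ^2) := by
              field_simp
            rw [expand]
            apply mul_nonneg (by positivity)
            linarith
        have hg : Summable fun m : ℤ => (if m = 0 then ‖fCoeff φ 0‖^2 else (0:ℝ)) := by
          apply summable_of_ne_finset_zero (s := ({0} : Finset ℤ))
          intro m hm
          simp only [Finset.mem_singleton] at hm
          rw [if_neg hm]
        exact Summable.of_nonneg_of_le (fun m => by positivity) hmaj ((hL.mul_left _).add hg)
      rw [tsum_eq_zero_of_not_summable hnotL, Real.zero_rpow (by norm_num : (1/2:ℝ) ≠ 0)]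
      have : (0:ℝ) ≤ K * (∑' m : ℤ, (1 + (m:ℝ)^2)^p * ‖fCoeff φ m‖^2) ^ (1/2:ℝ) :=
        mul_nonneg hK0 (Real.rpow_nonneg (tsum_nonneg fun m => by positivity) _)
      exact this
  · -- the defining series diverges: the function is identically zero
    have hz : (fun t : ℝ => ∑' n : ℤ, mul n * fCoeff φ n * Complex.exp (Complex.I * n * t))
        = fun _ => (0:ℂ) := by
      funext t
      apply tsum_eq_zero_of_not_summable
      intro h
      apply ha
      have h2 := h.norm
      have : (fun n : ℤ => ‖mul n * fCoeff φ n * Complex.exp (Complex.I * n * t)‖)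
          = fun n : ℤ => ‖mul n * fCoeff φ n‖ := by
        funext n
        rw [norm_mul, norm_exp_I_int_mul, mul_one]
      rwa [this] at h2
    rw [hz]
    have hzero : ∀ m : ℤ, fCoeff (fun _ => (0:ℂ)) m = 0 := by
      intro m
      simp [fCoeff]
    unfold sobNorm
    simp only [hzero]
    simp only [norm_zero]
    have h0 : (fun m : ℤ => (1 + (m:ℝ)^2)^(p+2) * (0:ℝ)^2) = fun _ => (0:ℝ) := by
      funext m; ring
    rw [h0, tsum_zero, Real.zero_rpow (by norm_num : (1/2:ℝ) ≠ 0)]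
    exact mul_nonneg hK0 (Real.rpow_nonneg (tsum_nonneg fun m => by positivity) _)

lemma symbol_facts (κ₁ ε : ℝ) (hκ₁ : 0 < κ₁) (hε : 0 < ε) (s : ℤ → ℂ)
    (hsq : ∀ n : ℤ, n ≠ 0 → (s n) ^ 2 = (n : ℂ) ^ 2 - ((κ₁ : ℂ) + (ε : ℂ) * Complex.I) ^ 2)
    (hbr : ∀ n : ℤ, n ≠ 0 → 0 < ((-(1 / 2 : ℂ)) * s n).im)
    (n : ℤ) (hn : n ≠ 0) :
    ‖(-(1 / 2 : ℂ)) * s n / ((|n| : ℤ) : ℂ) + 1 / 2‖ =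
      ‖((κ₁ : ℂ) + (ε : ℂ) * Complex.I) ^ 2‖ / (2 * |(n:ℝ)| * ‖((|n|:ℤ):ℂ) + s n‖) ∧
    |(n:ℝ)| ≤ ‖((|n|:ℤ):ℂ) + s n‖ ∧
    ‖((|n|:ℤ):ℂ) + s n‖ ≤ 2*|(n:ℝ)| +
      Real.sqrt ‖((κ₁ : ℂ) + (ε : ℂ) * Complex.I) ^ 2‖ := by
  set κ2 : ℂ := ((κ₁ : ℂ) + (ε : ℂ) * Complex.I) ^ 2 with hκ2def
  set A : ℂ := ((|n| : ℤ) : ℂ) with hAdef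
  have hK : κ2.im = 2*κ₁*ε := by
    simp [hκ2def, sq, Complex.add_im, Complex.add_re, Complex.mul_im, Complex.mul_re]
    ring
  have hsim : (s n).im < 0 := by
    have h := hbr n hn
    simp [Complex.mul_im, Complex.mul_re] at h
    linarith
  have him2 : ((s n)^2).im = -(2*κ₁*ε) := by
    rw [hsq n hn]
    simp [Complex.sub_im, hK, sq, Complex.mul_im, Complex.intCast_im, Complex.intCast_re]
  have hprod : 2 * (s n).re * (s n).im = -(2*κ₁*ε) := by
    rw [← him2]; simp [sq, Complex.mul_im]; ring
  have hre : 0 < (s n).re := by nlinarith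
  have hAre : A.re = |(n:ℝ)| := by
    simp [hAdef]
  have hAim : A.im = 0 := by simp [hAdef]
  have h1n : (1:ℝ) ≤ |(n:ℝ)| := by
    have := Int.one_le_abs hn
    exact_mod_cast this
  have hAnorm : ‖A‖ = |(n:ℝ)| := by
    rw [hAdef]
    rw [Complex.norm_intCast]
    push_cast
    simp
  have hAne : A ≠ 0 := by
    intro h
    rw [h] at hAre
    simp at hAre
    linarith [hAre]
  have hApSre : |(n:ℝ)| ≤ (A + s n).re := by
    simp [Complex.add_re, hAre]
    linarith
  have hApSne : A + s n ≠ 0 := by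
    intro h
    rw [h] at hApSre
    simp at hApSre
    exact hn (by exact_mod_cast hApSre)
  have hrele : |(n:ℝ)| ≤ ‖A + s n‖ :=
    le_trans hApSre (Complex.re_le_norm _)
  have hA2 : A ^ 2 = (n:ℂ)^2 := by
    rw [hAdef]
    exact_mod_cast congrArg (fun z : ℤ => (z : ℂ)) (_root_.sq_abs n)
  have key : (A - s n) * (A + s n) = κ2 := by
    have h := hsq n hn
    linear_combination hA2 - h
  have e1 : (-(1/2:ℂ))*(s n)/A + 1/2 = (A - s n)/(2*A) := by
    field_simp
    ring
  have e2 : A - s n = κ2/(A + s n) := by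
    rw [eq_div_iff hApSne]; exact key
  have e3 : (-(1/2:ℂ))*(s n)/A + 1/2 = κ2 / (2*A*(A + s n)) := by
    rw [e1, e2, div_div]
    congr 1
    ring
  refine ⟨?_, hrele, ?_⟩
  · rw [e3, norm_div, norm_mul, norm_mul, hAnorm]
    norm_num
  · have hns : ‖s n‖^2 ≤ (|(n:ℝ)| + Real.sqrt ‖κ2‖)^2 := by
      have h1 : ‖s n‖^2 = ‖(s n)^2‖ := by rw [norm_pow]
      have h2 : ‖(s n)^2‖ ≤ (n:ℝ)^2 + ‖κ2‖ := by
        rw [hsq n hn]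
        refine le_trans (norm_sub_le _ _) ?_
        have : ‖(n:ℂ)^2‖ = (n:ℝ)^2 := by
          rw [norm_pow, Complex.norm_intCast]
          rw [_root_.sq_abs]
        rw [this]
      have h3 : Real.sqrt ‖κ2‖ ^ 2 = ‖κ2‖ := Real.sq_sqrt (norm_nonneg _)
      have h4 : (n:ℝ)^2 = |(n:ℝ)|^2 := (_root_.sq_abs _).symm
      nlinarith [Real.sqrt_nonneg ‖κ2‖, abs_nonneg (n:ℝ)]
    have hsle : ‖s n‖ ≤ |(n:ℝ)| + Real.sqrt ‖κ2‖ := by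
      nlinarith [norm_nonneg (s n), Real.sqrt_nonneg ‖κ2‖, abs_nonneg (n:ℝ)]
    calc ‖A + s n‖ ≤ ‖A‖ + ‖s n‖ := norm_add_le _ _
      _ ≤ |(n:ℝ)| + (|(n:ℝ)| + Real.sqrt ‖κ2‖) := by rw [hAnorm]; linarith
      _ = 2*|(n:ℝ)| + Real.sqrt ‖κ2‖ := by ring
lemma stmt9' (κ₁ ε : ℝ) (hκ₁ : 0 < κ₁) (hε : 0 < ε) (s : ℤ → ℂ)
    (hsq : ∀ n : ℤ, n ≠ 0 → (s n) ^ 2 = (n : ℂ) ^ 2 - ((κ₁ : ℂ) + (ε : ℂ) * Complex.I) ^ 2)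
    (hbr : ∀ n : ℤ, n ≠ 0 → 0 < ((-(1 / 2 : ℂ)) * s n).im)
    (p : ℝ) :
    ∃ C : ℝ, ∀ φ : ℝ → ℂ,
      sobNorm (p + 2)
          (fun t => ∑' n : ℤ,
            (if n = 0 then 0
             else (-(1 / 2 : ℂ)) * s n / ((|n| : ℤ) : ℂ) + 1 / 2) *
              fCoeff φ n * Complex.exp (Complex.I * n * t))
        ≤ C * sobNorm p φ := by
  set κ2 : ℂ := ((κ₁ : ℂ) + (ε : ℂ) * Complex.I) ^ 2 with hκ2def
  have hK : κ2.im = 2*κ₁*ε := by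
    simp [hκ2def, sq, Complex.add_im, Complex.add_re, Complex.mul_im, Complex.mul_re]
    ring
  have hκ2ne : κ2 ≠ 0 := by
    intro h
    rw [h] at hK
    simp at hK
    rcases hK with h1 | h1 <;> linarith
  have hKpos : 0 < ‖κ2‖ := norm_pos_iff.mpr hκ2ne
  set B : ℝ := Real.sqrt ‖κ2‖ with hBdef
  have hB0 : 0 ≤ B := Real.sqrt_nonneg _
  set δ : ℝ := ‖κ2‖ / (4 + 2*B) with hδdef
  have hδ : 0 < δ := by positivity
  have hub : ∀ m : ℤ, ‖(if m = 0 then 0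
      else (-(1 / 2 : ℂ)) * s m / ((|m| : ℤ) : ℂ) + 1 / 2)‖ * (1 + (m:ℝ)^2) ≤ ‖κ2‖ := by
    intro m
    by_cases hm : m = 0
    · rw [if_pos hm, norm_zero, zero_mul]
      exact hKpos.le
    · rw [if_neg hm]
      obtain ⟨he, hlo, hhi⟩ := symbol_facts κ₁ ε hκ₁ hε s hsq hbr m hm
      rw [← hκ2def] at he hhi
      rw [he]
      have h1n : (1:ℝ) ≤ |(m:ℝ)| := by exact_mod_cast Int.one_le_abs hm
      have hNpos : (0:ℝ) < ‖((|m|:ℤ):ℂ) + s m‖ := lt_of_lt_of_le (by linarith) hlo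
      rw [div_mul_eq_mul_div, div_le_iff₀ (by positivity)]
      have hm2 : (m:ℝ)^2 = |(m:ℝ)|^2 := (_root_.sq_abs _).symm
      nlinarith [mul_le_mul_of_nonneg_left hlo (by positivity : (0:ℝ) ≤ 2*|(m:ℝ)|),
        mul_nonneg hKpos.le (sq_nonneg (|(m:ℝ)| - 1)),
        mul_le_mul_of_nonneg_left
          (mul_le_mul_of_nonneg_left hlo (by positivity : (0:ℝ) ≤ 2*|(m:ℝ)|)) hKpos.le]
  have hlb : ∀ m : ℤ, m ≠ 0 → δ ≤ ‖(if m = 0 then 0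
      else (-(1 / 2 : ℂ)) * s m / ((|m| : ℤ) : ℂ) + 1 / 2)‖ * (1 + (m:ℝ)^2) := by
    intro m hm
    rw [if_neg hm]
    obtain ⟨he, hlo, hhi⟩ := symbol_facts κ₁ ε hκ₁ hε s hsq hbr m hm
    rw [← hκ2def] at he hhi
    rw [← hBdef] at hhi
    rw [he]
    have h1n : (1:ℝ) ≤ |(m:ℝ)| := by exact_mod_cast Int.one_le_abs hm
    have hNpos : (0:ℝ) < ‖((|m|:ℤ):ℂ) + s m‖ := lt_of_lt_of_le (by linarith) hlo
    rw [hδdef, div_mul_eq_mul_div, le_div_iff₀ (by positivity), div_mul_eq_mul_div,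
      div_le_iff₀ (by positivity)]
    have hm2 : (m:ℝ)^2 = |(m:ℝ)|^2 := (_root_.sq_abs _).symm
    nlinarith [mul_le_mul_of_nonneg_left hhi (by positivity : (0:ℝ) ≤ 2*|(m:ℝ)|),
      mul_nonneg (mul_nonneg hKpos.le hB0) (sq_nonneg (|(m:ℝ)| - 1)),
      mul_nonneg (mul_nonneg hKpos.le hB0) (sq_nonneg (|(m:ℝ)|)),
      mul_nonneg (mul_nonneg hKpos.le hB0) (abs_nonneg (m:ℝ)),
      hKpos.le,
      mul_le_mul_of_nonneg_left
        (mul_le_mul_of_nonneg_left hhi (by positivity : (0:ℝ) ≤ 2*|(m:ℝ)|)) hKpos.le]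
  exact ⟨‖κ2‖, fun φ => main_bound
    (fun n => if n = 0 then 0 else (-(1 / 2 : ℂ)) * s n / ((|n| : ℤ) : ℂ) + 1 / 2)
    ‖κ2‖ δ hδ hub hlb p φ⟩

theorem stmt9 (κ₁ ε : ℝ) (hκ₁ : 0 < κ₁) (hε : 0 < ε) (s : ℤ → ℂ)
    (hsq : ∀ n : ℤ, n ≠ 0 → (s n) ^ 2 = (n : ℂ) ^ 2 - ((κ₁ : ℂ) + (ε : ℂ) * Complex.I) ^ 2)
    (hbr : ∀ n : ℤ, n ≠ 0 → 0 < ((-(1 / 2 : ℂ)) * s n).im)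
    (p : ℝ) :
    ∃ C : ℝ, ∀ φ : ℝ → ℂ,
      sobNorm (p + 2)
          (fun t => ∑' n : ℤ,
            (if n = 0 then 0
             else (-(1 / 2 : ℂ)) * s n / ((|n| : ℤ) : ℂ) + 1 / 2) *
              fCoeff φ n * Complex.exp (Complex.I * n * t))
        ≤ C * sobNorm p φ := stmt9' κ₁ ε hκ₁ hε s hsq hbr p
end
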